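/- For any graph G and any Roman dominating function f = (B_0, B_1, B_2) of minimum weight, the number of vertices assigned value 1 satisfies |B_1| ≥ 2γ(G) − γ_R(G). -/

import Mathlib

open Finset

/-- A set `S` is a dominating set of `G` if every vertex outside `S` has a neighbor in `S`. -/
def IsDominatingSet {V : Type*} (G : SimpleGraph V) (S : Set V) : Prop :=
  ∀ v, v ∉ S → ∃ u ∈ S, G.Adj u v

/-- The domination number `γ(G)`. -/
noncomputable def domNum {V : Type*} [Fintype V] (G : SimpleGraph V) : ℕ :=
  sInf {n | ∃ S : Finset V, IsDominatingSet G ↑S ∧ S.card = n}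

/-- A Roman dominating function: values in {0,1,2}, every vertex of value 0 has a
neighbor of value 2. -/
def IsRDF {V : Type*} (G : SimpleGraph V) (f : V → ℕ) : Prop :=
  (∀ v, f v ≤ 2) ∧ ∀ v, f v = 0 → ∃ u, G.Adj u v ∧ f u = 2

/-- The Roman domination number `γ_R(G)`. -/
noncomputable def romanDomNum {V : Type*} [Fintype V] (G : SimpleGraph V) : ℕ :=
  sInf {n | ∃ f : V → ℕ, IsRDF G f ∧ ∑ v, f v = n}

/-- The strong product of graphs. -/
def strongProd {V W : Type*} (G : SimpleGraph V) (H : SimpleGraph W) :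
    SimpleGraph (V × W) where
  Adj x y := x ≠ y ∧ (x.1 = y.1 ∨ G.Adj x.1 y.1) ∧ (x.2 = y.2 ∨ H.Adj x.2 y.2)
  symm := ⟨fun x y => by
    rintro ⟨h, h1, h2⟩
    refine ⟨h.symm, ?_, ?_⟩
    · cases h1 with
      | inl h => exact Or.inl h.symm
      | inr h => exact Or.inr h.symm
    · cases h2 with
      | inl h => exact Or.inl h.symm
      | inr h => exact Or.inr h.symm
  ⟩
  loopless := ⟨fun x => by simp⟩

/-- `G` has an efficient dominating set: a dominating set whose elements have
pairwise disjoint closed neighborhoods. -/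
def HasEfficientDomSet {V : Type*} (G : SimpleGraph V) : Prop :=
  ∃ S : Finset V, IsDominatingSet G ↑S ∧
    ∀ u ∈ S, ∀ v ∈ S, u ≠ v →
      Disjoint (insert u (G.neighborSet u)) (insert v (G.neighborSet v))

theorem stmt2 {V : Type*} [Fintype V] [DecidableEq V] (G : SimpleGraph V)
    (f : V → ℕ) (hf : IsRDF G f) (hmin : ∑ v, f v = romanDomNum G) :
    ((Finset.univ.filter (fun v => f v = 1)).card : ℤ) ≥
      2 * (domNum G : ℤ) - romanDomNum G := by
  classical
  set B1 := univ.filter (fun v => f v = 1) with hB1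
  set B2 := univ.filter (fun v => f v = 2) with hB2
  have hdom : IsDominatingSet G ↑(univ.filter (fun v => f v ≠ 0)) := by
    intro v hv
    simp only [coe_filter, Set.mem_setOf_eq, mem_univ, true_and] at hv
    push_neg at hv
    obtain ⟨u, hadj, hu⟩ := hf.2 v hv
    exact ⟨u, by simp [hu], hadj⟩
  have h1 : domNum G ≤ (univ.filter (fun v => f v ≠ 0)).card :=
    Nat.sInf_le ⟨_, hdom, rfl⟩
  have hdisj : Disjoint B1 B2 := by
    rw [Finset.disjoint_left]
    intro a ha hb
    rw [hB1, mem_filter] at ha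
    rw [hB2, mem_filter] at hb
    omega
  have hcard : (univ.filter (fun v => f v ≠ 0)).card = B1.card + B2.card := by
    rw [hB1, hB2, ← Finset.card_union_of_disjoint hdisj]
    congr 1
    ext v
    simp only [hB1, hB2, mem_filter, mem_union, mem_univ, true_and]
    have := hf.1 v
    omega
  have hs1 : ∑ v ∈ B1, f v = B1.card := by
    rw [Finset.sum_congr rfl (fun v hv => (mem_filter.mp hv).2)]
    simp
    rfl
  have hs2 : ∑ v ∈ B2, f v = 2 * B2.card := by
    rw [Finset.sum_congr rfl (fun v hv => (mem_filter.mp hv).2)]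
    simp [mul_comm]
    rfl
  have hsum : B1.card + 2 * B2.card ≤ ∑ v, f v := by
    calc B1.card + 2 * B2.card = ∑ v ∈ B1 ∪ B2, f v := by
          rw [Finset.sum_union hdisj, hs1, hs2]
      _ ≤ ∑ v, f v := Finset.sum_le_sum_of_subset (Finset.subset_univ _)
  rw [hcard] at h1
  omega
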